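/- arXiv:1209.5516 — 4 statements merged into one kernel-verified Lean document; each statement's English description precedes it below -/
import Mathlib

section
/- Let n ≥ 4 and 3 ≤ i ≤ n−1, and set δ(i) = −(n − i − 1/2)λ_i + ρ. Then there is no simple root α' ∈ Π(𝔩) and no sequence (β_1, …, β_m) of positive roots of B_n that links −α' + δ(i) to −2e_i + δ(i). (This is the combinatorial content, via Lepowsky's criterion, of Proposition 6.6: the standard map from M_q(−2ε_i−(n−i−1/2)λ_i+ρ) to M_q(−(n−i−1/2)λ_i+ρ) for the maximal parabolic subalgebra of type B_n(i) is non-zero.) -/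
/-!
Statement 0 (Proposition 6.6, combinatorial content via Lepowsky's criterion):
for `B_n(i)` with `n ≥ 4`, `3 ≤ i ≤ n − 1` and `δ(i) = −(n − i − 1/2)λ_i + ρ`,
there is no simple root `α' ∈ Π(𝔩)` and no sequence of positive roots of `B_n`
linking `−α' + δ(i)` to `−2e_i + δ(i)`.
-/

open scoped RealInnerProductSpace

noncomputable section

/-- The standard basis vector `e_j` of `ℝ^n`, with 1-based index `1 ≤ j ≤ n`. -/
def E (n j : ℕ) : EuclideanSpace ℝ (Fin n) :=
  if h : 1 ≤ j ∧ j ≤ n then EuclideanSpace.single (⟨j - 1, by omega⟩ : Fin n) 1 else 0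

/-- The coroot `β^∨ = 2β/⟨β,β⟩`. -/
def coroot {n : ℕ} (β : EuclideanSpace ℝ (Fin n)) : EuclideanSpace ℝ (Fin n) :=
  (2 / ⟪β, β⟫) • β

/-- The reflection `s_β(v) = v − ⟨v, β^∨⟩ β`. -/
def sRefl {n : ℕ} (β v : EuclideanSpace ℝ (Fin n)) : EuclideanSpace ℝ (Fin n) :=
  v - ⟪v, coroot β⟫ • β

/-- The fundamental weight `λ_i = e_1 + ⋯ + e_i`. -/
def lambdaF (n i : ℕ) : EuclideanSpace ℝ (Fin n) := ∑ j ∈ Finset.Icc 1 i, E n j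

/-- Half the sum of the positive roots of type `B_n`:
`ρ = Σ_{j=1}^n (n − j + 1/2) e_j`. -/
def rhoB (n : ℕ) : EuclideanSpace ℝ (Fin n) :=
  ∑ j ∈ Finset.Icc 1 n, ((n : ℝ) - (j : ℝ) + 1 / 2) • E n j

/-- `δ(i) = −(n − i − 1/2)λ_i + ρ`. -/
def deltaB (n i : ℕ) : EuclideanSpace ℝ (Fin n) :=
  (-((n : ℝ) - (i : ℝ) - 1 / 2)) • lambdaF n i + rhoB n

/-- The positive roots of type `B_n`:
`{e_j − e_k : j < k} ∪ {e_j + e_k : j < k} ∪ {e_j}`. -/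
def DeltaPlusB (n : ℕ) : Set (EuclideanSpace ℝ (Fin n)) :=
  {v | ∃ j k, 1 ≤ j ∧ j < k ∧ k ≤ n ∧ v = E n j - E n k} ∪
  {v | ∃ j k, 1 ≤ j ∧ j < k ∧ k ≤ n ∧ v = E n j + E n k} ∪
  {v | ∃ j, 1 ≤ j ∧ j ≤ n ∧ v = E n j}

/-- `Π(𝔩)`: the simple roots `α_j = e_j − e_{j+1}` (`1 ≤ j ≤ n−1`) and `α_n = e_n`,
with `α_i` removed. -/
def PiL (n i : ℕ) : Set (EuclideanSpace ℝ (Fin n)) :=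
  {v | ∃ j, 1 ≤ j ∧ j ≤ n - 1 ∧ j ≠ i ∧ v = E n j - E n (j + 1)} ∪
  {v | n ≠ i ∧ v = E n n}

/-- `Links (β_1, …, β_m) δ λ`: with `δ_0 = δ`,  `δ_t = s_{β_t}(δ_{t−1})`, one has
`δ_m = λ` and `⟨δ_{t−1}, β_t^∨⟩ ∈ ℤ_{≥0}` for every `t`. -/
inductive Links {n : ℕ} :
    List (EuclideanSpace ℝ (Fin n)) → EuclideanSpace ℝ (Fin n) →
      EuclideanSpace ℝ (Fin n) → Prop
  | nil (δ : EuclideanSpace ℝ (Fin n)) : Links [] δ δ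
  | cons {β : EuclideanSpace ℝ (Fin n)} {βs : List (EuclideanSpace ℝ (Fin n))}
      {δ lam : EuclideanSpace ℝ (Fin n)} (c : ℕ)
      (hc : ⟪δ, coroot β⟫ = (c : ℝ)) (h : Links βs (sRefl β δ) lam) :
      Links (β :: βs) δ lam

namespace NoLinkAux

lemma E_apply (n j : ℕ) (m : Fin n) :
    E n j m = if (m : ℕ) + 1 = j then 1 else 0 := by
  unfold E
  by_cases h : 1 ≤ j ∧ j ≤ n
  · obtain ⟨hj1, hj2⟩ := h
    rw [dif_pos ⟨hj1, hj2⟩, EuclideanSpace.single_apply]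
    have h2 : (m = (⟨j - 1, by omega⟩ : Fin n)) ↔ ((m:ℕ) + 1 = j) := by
      rw [Fin.ext_iff]; simp; omega
    rw [if_congr h2 rfl rfl]
  · rw [dif_neg h]
    have : ¬ ((m:ℕ) + 1 = j) := by have := m.isLt; omega
    rw [if_neg this]; rfl

lemma E_apply' (n j t : ℕ) (h1 : 1 ≤ t) (h2 : t ≤ n) :
    E n j (⟨t - 1, by omega⟩ : Fin n) = if t = j then 1 else 0 := by
  rw [E_apply]; exact if_congr (by simp; omega) rfl rfl

lemma sum_E_apply (n a b : ℕ) (m : Fin n) :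
    (∑ j ∈ Finset.Icc a b, E n j) m = if a ≤ (m:ℕ) + 1 ∧ (m:ℕ) + 1 ≤ b then 1 else 0 := by
  rw [WithLp.ofLp_sum, Finset.sum_apply]
  have h1 : ∀ j ∈ Finset.Icc a b, E n j m = if j = (m:ℕ)+1 then (1:ℝ) else 0 := by
    intro j _; rw [E_apply]; exact if_congr eq_comm rfl rfl
  rw [Finset.sum_congr rfl h1, Finset.sum_ite_eq' (Finset.Icc a b) ((m:ℕ)+1) (fun _ => (1:ℝ))]
  simp [Finset.mem_Icc]

lemma inner_E_left {n : ℕ} (j : ℕ) (h1 : 1 ≤ j) (h2 : j ≤ n) (x : EuclideanSpace ℝ (Fin n)) :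
    ⟪E n j, x⟫ = x ⟨j - 1, by omega⟩ := by
  unfold E
  rw [dif_pos ⟨h1, h2⟩, EuclideanSpace.inner_single_left]
  simp

lemma inner_E_right {n : ℕ} (j : ℕ) (h1 : 1 ≤ j) (h2 : j ≤ n) (x : EuclideanSpace ℝ (Fin n)) :
    ⟪x, E n j⟫ = x ⟨j - 1, by omega⟩ := by
  rw [real_inner_comm]; exact inner_E_left j h1 h2 x

lemma inner_E_E {n : ℕ} (j k : ℕ) (h1 : 1 ≤ j) (h2 : j ≤ n) (h3 : 1 ≤ k) (h4 : k ≤ n) :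
    ⟪E n j, E n k⟫ = if j = k then 1 else 0 := by
  rw [inner_E_left j h1 h2, E_apply' n k j h1 h2]

lemma inner_coroot_sub {n : ℕ} (j k : ℕ) (h1 : 1 ≤ j) (hjk : j < k) (h2 : k ≤ n)
    (x : EuclideanSpace ℝ (Fin n)) :
    ⟪x, coroot (E n j - E n k)⟫ =
      x ⟨j - 1, by omega⟩ - x ⟨k - 1, by omega⟩ := by
  have hβ : ⟪E n j - E n k, E n j - E n k⟫ = 2 := by
    rw [inner_sub_left, inner_sub_right, inner_sub_right,
      inner_E_E j j h1 (by omega) h1 (by omega),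
      inner_E_E j k h1 (by omega) (by omega) h2,
      inner_E_E k j (by omega) h2 h1 (by omega),
      inner_E_E k k (by omega) h2 (by omega) h2]
    have : j ≠ k := by omega
    simp [this, Ne.symm this]; norm_num
  rw [coroot, hβ, real_inner_smul_right, inner_sub_right,
    inner_E_right j h1 (by omega), inner_E_right k (by omega) h2]
  norm_num

end NoLinkAux

namespace NoLinkAux


/-- Integrality class of coordinates. -/
def Qp (n i : ℕ) (x : EuclideanSpace ℝ (Fin n)) : Prop :=
  ∀ m : Fin n, ∃ z : ℤ, x m = z + (if (m:ℕ) + 1 ≤ i then 0 else 1/2)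

lemma Qp_val {n i : ℕ} {x : EuclideanSpace ℝ (Fin n)} (hQ : Qp n i x)
    (j : ℕ) (h1 : 1 ≤ j) (h2 : j ≤ n) :
    ∃ z : ℤ, x ⟨j - 1, by omega⟩ = z + (if j ≤ i then 0 else 1/2) := by
  obtain ⟨z, hz⟩ := hQ ⟨j - 1, by omega⟩
  refine ⟨z, ?_⟩
  rw [hz]
  congr 1
  exact if_congr (by simp; omega) rfl rfl

lemma E_int (n j : ℕ) : ∀ m : Fin n, ∃ z : ℤ, E n j m = z := by
  intro m; rw [E_apply]
  by_cases h : (m:ℕ) + 1 = j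
  · exact ⟨1, by simp [h]⟩
  · exact ⟨0, by simp [h]⟩

lemma root_int {n : ℕ} {β : EuclideanSpace ℝ (Fin n)} (hβ : β ∈ DeltaPlusB n) :
    ∀ m : Fin n, ∃ z : ℤ, β m = z := by
  rcases hβ with (⟨j, k, _, _, _, rfl⟩ | ⟨j, k, _, _, _, rfl⟩) | ⟨j, _, _, rfl⟩
  · intro m
    obtain ⟨z1, h1⟩ := E_int n j m; obtain ⟨z2, h2⟩ := E_int n k m
    exact ⟨z1 - z2, by show E n j m - E n k m = _; rw [h1, h2]; push_cast; ring⟩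
  · intro m
    obtain ⟨z1, h1⟩ := E_int n j m; obtain ⟨z2, h2⟩ := E_int n k m
    exact ⟨z1 + z2, by show E n j m + E n k m = _; rw [h1, h2]; push_cast; ring⟩
  · exact E_int n j

end NoLinkAux

namespace NoLinkAux

lemma Qp_step {n i : ℕ} {x β : EuclideanSpace ℝ (Fin n)} (hQ : Qp n i x)
    (hβ : ∀ m, ∃ z : ℤ, β m = z) (c : ℕ) (hc : ⟪x, coroot β⟫ = (c:ℝ)) :
    Qp n i (sRefl β x) := by
  intro m
  obtain ⟨z, hz⟩ := hQ m
  obtain ⟨w, hw⟩ := hβ m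
  refine ⟨z - c * w, ?_⟩
  show x m - ⟪x, coroot β⟫ * β m = _
  rw [hc, hz, hw]; push_cast; ring

lemma links_mono {n : ℕ} (i : ℕ) (u : EuclideanSpace ℝ (Fin n))
    (hu : ∀ β ∈ DeltaPlusB n, ∀ x : EuclideanSpace ℝ (Fin n), Qp n i x →
      ∀ c : ℕ, ⟪x, coroot β⟫ = (c:ℝ) → (0:ℝ) ≤ ⟪β, u⟫) :
    ∀ {βs : List (EuclideanSpace ℝ (Fin n))} {x y : EuclideanSpace ℝ (Fin n)},
      Links βs x y → (∀ β ∈ βs, β ∈ DeltaPlusB n) → Qp n i x → ⟪y, u⟫ ≤ ⟪x, u⟫ := by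
  intro βs x y h
  induction h with
  | nil δ => intro _ _; exact le_refl _
  | @cons β βs' δ lam c hc hlk ih =>
    intro hmem hQ
    have hβ : β ∈ DeltaPlusB n := hmem β List.mem_cons_self
    have h1 : (0:ℝ) ≤ ⟪β, u⟫ := hu β hβ δ hQ c hc
    have hQ' : Qp n i (sRefl β δ) := Qp_step hQ (root_int hβ) c hc
    have h2 := ih (fun b hb => hmem b (List.mem_cons_of_mem _ hb)) hQ'
    have h3 : ⟪sRefl β δ, u⟫ = ⟪δ, u⟫ - (c:ℝ) * ⟪β, u⟫ := by
      rw [sRefl, inner_sub_left, real_inner_smul_left, hc]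
    have h4 : (0:ℝ) ≤ (c:ℝ) * ⟪β, u⟫ := mul_nonneg (Nat.cast_nonneg c) h1
    linarith

lemma inner_E_sum {n : ℕ} (a b j : ℕ) (h1 : 1 ≤ j) (h2 : j ≤ n) :
    ⟪E n j, ∑ m ∈ Finset.Icc a b, E n m⟫ = if a ≤ j ∧ j ≤ b then 1 else 0 := by
  rw [inner_E_left j h1 h2, sum_E_apply]
  exact if_congr (by simp; omega) rfl rfl

lemma hu_main (n i a b : ℕ)
    (hclosed : ∀ p q : ℕ, 1 ≤ p → p < q → q ≤ n → ((p ≤ i) ↔ (q ≤ i)) →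
      a ≤ q → q ≤ b → a ≤ p) :
    ∀ β ∈ DeltaPlusB n, ∀ x : EuclideanSpace ℝ (Fin n), Qp n i x →
      ∀ c : ℕ, ⟪x, coroot β⟫ = (c:ℝ) → (0:ℝ) ≤ ⟪β, ∑ m ∈ Finset.Icc a b, E n m⟫ := by
  intro β hβ x hQ c hc
  rcases hβ with (⟨j, k, hj1, hjk, hk, rfl⟩ | ⟨j, k, hj1, hjk, hk, rfl⟩) | ⟨j, hj1, hj2, rfl⟩
  · rw [inner_sub_left, inner_E_sum a b j hj1 (by omega), inner_E_sum a b k (by omega) hk]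
    by_cases hcl : (j ≤ i) ↔ (k ≤ i)
    · by_cases hkm : a ≤ k ∧ k ≤ b
      · have haj : a ≤ j := hclosed j k hj1 hjk hk hcl hkm.1 hkm.2
        rw [if_pos ⟨haj, by omega⟩, if_pos hkm]; norm_num
      · rw [if_neg hkm]; split_ifs <;> norm_num
    · exfalso
      rw [inner_coroot_sub j k hj1 hjk hk] at hc
      obtain ⟨zj, hzj⟩ := Qp_val hQ j hj1 (by omega)
      obtain ⟨zk, hzk⟩ := Qp_val hQ k (by omega) hk
      rw [hzj, hzk] at hc
      by_cases hji : j ≤ i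
      · have hki : ¬ k ≤ i := fun h => hcl ⟨fun _ => h, fun _ => hji⟩
        rw [if_pos hji, if_neg hki] at hc
        have h5 : ((2*zj - 2*zk - 2*(c:ℤ) : ℤ) : ℝ) = 1 := by push_cast; linarith
        have h6 : 2*zj - 2*zk - 2*(c:ℤ) = 1 := by exact_mod_cast h5
        omega
      · have hki : k ≤ i := by
          by_contra hki; exact hcl (iff_of_false hji hki)
        rw [if_neg hji, if_pos hki] at hc
        have h5 : ((2*zj - 2*zk - 2*(c:ℤ) : ℤ) : ℝ) = -1 := by push_cast; linarith
        have h6 : 2*zj - 2*zk - 2*(c:ℤ) = -1 := by exact_mod_cast h5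
        omega
  · rw [inner_add_left, inner_E_sum a b j hj1 (by omega), inner_E_sum a b k (by omega) hk]
    split_ifs <;> norm_num
  · rw [inner_E_sum a b j hj1 hj2]; split_ifs <;> norm_num

lemma lambdaF_apply (n i : ℕ) (m : Fin n) :
    lambdaF n i m = if (m:ℕ) + 1 ≤ i then 1 else 0 := by
  rw [lambdaF, sum_E_apply]
  exact if_congr (by omega) rfl rfl

lemma rhoB_apply (n : ℕ) (m : Fin n) :
    rhoB n m = (n:ℝ) - (m:ℕ) - 1/2 := by
  rw [rhoB, WithLp.ofLp_sum, Finset.sum_apply]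
  have h1 : ∀ j ∈ Finset.Icc 1 n, (((n:ℝ) - (j:ℝ) + 1/2) • E n j) m
      = if j = (m:ℕ)+1 then ((n:ℝ) - (((m:ℕ):ℝ)+1) + 1/2) else 0 := by
    intro j _
    show ((n:ℝ) - (j:ℝ) + 1/2) * E n j m = _
    rw [E_apply]
    by_cases h : (m:ℕ)+1 = j
    · have hj : (j:ℝ) = ((m:ℕ):ℝ) + 1 := by exact_mod_cast h.symm
      rw [if_pos h, if_pos h.symm, hj]; ring
    · rw [if_neg h, if_neg (fun hh => h hh.symm)]; ring
  rw [Finset.sum_congr rfl h1,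
    Finset.sum_ite_eq' (Finset.Icc 1 n) ((m:ℕ)+1) (fun _ => ((n:ℝ) - (((m:ℕ):ℝ)+1) + 1/2))]
  have hm : (m:ℕ)+1 ∈ Finset.Icc 1 n := by
    rw [Finset.mem_Icc]; have := m.isLt; omega
  rw [if_pos hm]; ring

lemma deltaB_apply (n i : ℕ) (m : Fin n) :
    deltaB n i m = if (m:ℕ)+1 ≤ i then (i:ℝ) - ((m:ℕ):ℝ) else (n:ℝ) - ((m:ℕ):ℝ) - 1/2 := by
  show (-((n:ℝ) - (i:ℝ) - 1/2)) * lambdaF n i m + rhoB n m = _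
  rw [lambdaF_apply, rhoB_apply]
  split_ifs with h
  · ring
  · ring

lemma Qp_deltaB (n i : ℕ) : Qp n i (deltaB n i) := by
  intro m
  rw [deltaB_apply]
  by_cases h : (m:ℕ)+1 ≤ i
  · exact ⟨(i:ℤ) - (m:ℕ), by rw [if_pos h, if_pos h]; push_cast; ring⟩
  · exact ⟨(n:ℤ) - (m:ℕ) - 1, by rw [if_neg h, if_neg h]; push_cast; ring⟩

lemma Qp_shift {n i : ℕ} {x α : EuclideanSpace ℝ (Fin n)} (hQ : Qp n i x)
    (hα : ∀ m, ∃ z : ℤ, α m = z) : Qp n i (-α + x) := by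
  intro m
  obtain ⟨z, hz⟩ := hQ m
  obtain ⟨w, hw⟩ := hα m
  exact ⟨z - w, by show -α m + x m = _; rw [hz, hw]; push_cast; ring⟩

end NoLinkAux

open NoLinkAux in
theorem no_link_for_Bni (n i : ℕ) (hn : 4 ≤ n) (hi1 : 3 ≤ i) (hi2 : i ≤ n - 1) :
    ¬ ∃ (α : EuclideanSpace ℝ (Fin n)) (βs : List (EuclideanSpace ℝ (Fin n))),
        α ∈ PiL n i ∧ (∀ β ∈ βs, β ∈ DeltaPlusB n) ∧
        Links βs (-α + deltaB n i) (-((2 : ℝ) • E n i) + deltaB n i) := by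
  rintro ⟨α, βs, hα, hmem, hlink⟩
  rcases hα with ⟨j, hj1, hj2, hji, rfl⟩ | ⟨hni, rfl⟩
  · -- α = e_j - e_{j+1}, j ≠ i
    have hjn : j + 1 ≤ n := by omega
    have hαint : ∀ m : Fin n, ∃ z : ℤ, (E n j - E n (j+1)) m = z :=
      root_int (Or.inl (Or.inl ⟨j, j+1, hj1, by omega, hjn, rfl⟩))
    have hQstart := Qp_shift (Qp_deltaB n i) hαint
    rcases lt_or_gt_of_ne hji with hlt | hgt
    · -- j < i : use u = sum over [1, j]
      have hmono := links_mono i (∑ m ∈ Finset.Icc 1 j, E n m)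
        (hu_main n i 1 j (fun p q hp _ _ _ _ _ => hp)) hlink hmem hQstart
      have c1 : ⟪E n j, (∑ m ∈ Finset.Icc 1 j, E n m)⟫ = 1 := by
        rw [inner_E_sum 1 j j hj1 (by omega)]; exact if_pos ⟨by omega, le_refl j⟩
      have c2 : ⟪E n (j+1), (∑ m ∈ Finset.Icc 1 j, E n m)⟫ = 0 := by
        rw [inner_E_sum 1 j (j+1) (by omega) hjn]; exact if_neg (by omega)
      have c3 : ⟪E n i, (∑ m ∈ Finset.Icc 1 j, E n m)⟫ = 0 := by
        rw [inner_E_sum 1 j i (by omega) (by omega)]; exact if_neg (by omega)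
      rw [inner_add_left, inner_add_left, inner_neg_left, inner_neg_left,
        inner_sub_left, real_inner_smul_left, c1, c2, c3] at hmono
      linarith
    · -- j > i : use u = sum over [i+1, j]
      have hclosed : ∀ p q : ℕ, 1 ≤ p → p < q → q ≤ n → ((p ≤ i) ↔ (q ≤ i)) →
          i + 1 ≤ q → q ≤ j → i + 1 ≤ p := by
        intro p q hp hpq hq hiff haq hqb
        by_cases hpi : p ≤ i
        · have := hiff.mp hpi; omega
        · omega
      have hmono := links_mono i (∑ m ∈ Finset.Icc (i+1) j, E n m)
        (hu_main n i (i+1) j hclosed) hlink hmem hQstart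
      have c1 : ⟪E n j, (∑ m ∈ Finset.Icc (i+1) j, E n m)⟫ = 1 := by
        rw [inner_E_sum (i+1) j j hj1 (by omega)]; exact if_pos ⟨by omega, le_refl j⟩
      have c2 : ⟪E n (j+1), (∑ m ∈ Finset.Icc (i+1) j, E n m)⟫ = 0 := by
        rw [inner_E_sum (i+1) j (j+1) (by omega) hjn]; exact if_neg (by omega)
      have c3 : ⟪E n i, (∑ m ∈ Finset.Icc (i+1) j, E n m)⟫ = 0 := by
        rw [inner_E_sum (i+1) j i (by omega) (by omega)]; exact if_neg (by omega)
      rw [inner_add_left, inner_add_left, inner_neg_left, inner_neg_left,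
        inner_sub_left, real_inner_smul_left, c1, c2, c3] at hmono
      linarith
  · -- α = e_n
    have hQstart := Qp_shift (Qp_deltaB n i) (E_int n n)
    have hclosed : ∀ p q : ℕ, 1 ≤ p → p < q → q ≤ n → ((p ≤ i) ↔ (q ≤ i)) →
        i + 1 ≤ q → q ≤ n → i + 1 ≤ p := by
      intro p q hp hpq hq hiff haq hqb
      by_cases hpi : p ≤ i
      · have := hiff.mp hpi; omega
      · omega
    have hmono := links_mono i (∑ m ∈ Finset.Icc (i+1) n, E n m)
      (hu_main n i (i+1) n hclosed) hlink hmem hQstart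
    have c1 : ⟪E n n, (∑ m ∈ Finset.Icc (i+1) n, E n m)⟫ = 1 := by
      rw [inner_E_sum (i+1) n n (by omega) (le_refl n)]; exact if_pos ⟨by omega, le_refl n⟩
    have c3 : ⟪E n i, (∑ m ∈ Finset.Icc (i+1) n, E n m)⟫ = 0 := by
      rw [inner_E_sum (i+1) n i (by omega) (by omega)]; exact if_neg (by omega)
    rw [inner_add_left, inner_add_left, inner_neg_left, inner_neg_left,
      real_inner_smul_left, c1, c3] at hmono
    linarith


end
end

section
/- (combinatorial core of Lemma 6.10) Let n ≥ 4 and 3 ≤ i ≤ n−1. Then {β ∈ Δ(𝔤(1)) : 2e_i − β ∈ Δ} = {e_i + e_k : i+1 ≤ k ≤ n} ∪ {e_i − e_k : i+1 ≤ k ≤ n} ∪ {e_i}. -/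
open scoped RealInnerProductSpace

noncomputable section

/-- All roots of type `B_n`: `Δ = Δ⁺ ∪ (−Δ⁺)`. -/
def DeltaB (n : ℕ) : Set (EuclideanSpace ℝ (Fin n)) :=
  DeltaPlusB n ∪ {v | -v ∈ DeltaPlusB n}

/-- `Δ(𝔤(1))` for `B_n(i)`:
`{e_j ± e_k : 1 ≤ j ≤ i, i+1 ≤ k ≤ n} ∪ {e_j : 1 ≤ j ≤ i}`. -/
def DeltaG1 (n i : ℕ) : Set (EuclideanSpace ℝ (Fin n)) :=
  {v | ∃ j k, 1 ≤ j ∧ j ≤ i ∧ i + 1 ≤ k ∧ k ≤ n ∧ (v = E n j - E n k ∨ v = E n j + E n k)} ∪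
  {v | ∃ j, 1 ≤ j ∧ j ≤ i ∧ v = E n j}

lemma E_apply' {n j : ℕ} (h1 : 1 ≤ j) (h2 : j ≤ n) (x : Fin n) :
    E n j x = if (x : ℕ) = j - 1 then 1 else 0 := by
  rw [E, dif_pos ⟨h1, h2⟩]
  simp [EuclideanSpace.single_apply, Fin.ext_iff]

lemma plus_coord' {n : ℕ} {v : EuclideanSpace ℝ (Fin n)} (hv : v ∈ DeltaPlusB n) (x : Fin n) :
    v x = 1 ∨ v x = 0 ∨ v x = -1 := by
  rcases hv with (⟨j,k,h1,h2,h3,rfl⟩|⟨j,k,h1,h2,h3,rfl⟩)|⟨j,h1,h2,rfl⟩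
  · simp only [PiLp.sub_apply, E_apply' h1 (show j ≤ n by omega) x,
      E_apply' (show (1:ℕ) ≤ k by omega) h3 x]
    split_ifs <;> norm_num
  · simp only [PiLp.add_apply, E_apply' h1 (show j ≤ n by omega) x,
      E_apply' (show (1:ℕ) ≤ k by omega) h3 x]
    split_ifs <;> norm_num <;> omega
  · rw [E_apply' h1 h2 x]; split_ifs <;> norm_num

lemma root_coord' {n : ℕ} {v : EuclideanSpace ℝ (Fin n)} (hv : v ∈ DeltaB n) (x : Fin n) :
    v x = 1 ∨ v x = 0 ∨ v x = -1 := by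
  rcases hv with h | h
  · exact plus_coord' h x
  · have h2 := plus_coord' h x
    simp only [PiLp.neg_apply] at h2
    rcases h2 with h2|h2|h2
    · right; right; linarith
    · right; left; linarith
    · left; linarith

/-- combinatorial core of Lemma 6.10:
`{β ∈ Δ(𝔤(1)) : 2e_i − β ∈ Δ} = {e_i ± e_k : i+1 ≤ k ≤ n} ∪ {e_i}`. -/
theorem g1_roots_with_2ei_sub_root (n i : ℕ)
    (hn : 4 ≤ n) (hi1 : 3 ≤ i) (hi2 : i ≤ n - 1) :
    {β | β ∈ DeltaG1 n i ∧ (2 : ℝ) • E n i - β ∈ DeltaB n} =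
      {v | ∃ k, i + 1 ≤ k ∧ k ≤ n ∧ v = E n i + E n k} ∪
      {v | ∃ k, i + 1 ≤ k ∧ k ≤ n ∧ v = E n i - E n k} ∪
      {E n i} := by
  have hin : i - 1 < n := by omega
  have hi1n : 1 ≤ i := by omega
  have hinn : i ≤ n := by omega
  set x : Fin n := ⟨i - 1, hin⟩ with hx
  have hxval : (x : ℕ) = i - 1 := rfl
  ext β
  simp only [Set.mem_setOf_eq, Set.mem_union, Set.mem_singleton_iff]
  constructor
  · rintro ⟨hβ, hroot⟩
    rcases hβ with ⟨j, k, hj1, hj2, hk1, hk2, hβ⟩ | ⟨j, hj1, hj2, rfl⟩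
    · have hji : j = i := by
        by_contra hne
        have hc := root_coord' hroot x
        rcases hβ with rfl | rfl <;>
        · simp only [PiLp.sub_apply, PiLp.add_apply, PiLp.smul_apply, smul_eq_mul,
            E_apply' hi1n hinn x, E_apply' hj1 (show j ≤ n by omega) x,
            E_apply' (show (1:ℕ) ≤ k by omega) hk2 x, hxval] at hc
          rw [if_pos trivial, if_neg (show ¬ i - 1 = j - 1 by omega),
            if_neg (show ¬ i - 1 = k - 1 by omega)] at hc
          norm_num at hc
      subst hji
      rcases hβ with rfl | rfl
      · exact Or.inl (Or.inr ⟨k, hk1, hk2, rfl⟩)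
      · exact Or.inl (Or.inl ⟨k, hk1, hk2, rfl⟩)
    · have hji : j = i := by
        by_contra hne
        have hc := root_coord' hroot x
        simp only [PiLp.sub_apply, PiLp.smul_apply, smul_eq_mul,
          E_apply' hi1n hinn x, E_apply' hj1 (show j ≤ n by omega) x, hxval] at hc
        rw [if_pos trivial, if_neg (show ¬ i - 1 = j - 1 by omega)] at hc
        norm_num at hc
      subst hji
      exact Or.inr rfl
  · rintro ((⟨k, hk1, hk2, rfl⟩ | ⟨k, hk1, hk2, rfl⟩) | rfl)
    · refine ⟨Or.inl ⟨i, k, hi1n, le_refl i, hk1, hk2, Or.inr rfl⟩, ?_⟩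
      have h : (2 : ℝ) • E n i - (E n i + E n k) = E n i - E n k := by module
      rw [h]
      exact Or.inl (Or.inl (Or.inl ⟨i, k, hi1n, by omega, hk2, rfl⟩))
    · refine ⟨Or.inl ⟨i, k, hi1n, le_refl i, hk1, hk2, Or.inl rfl⟩, ?_⟩
      have h : (2 : ℝ) • E n i - (E n i - E n k) = E n i + E n k := by module
      rw [h]
      exact Or.inl (Or.inl (Or.inr ⟨i, k, hi1n, by omega, hk2, rfl⟩))
    · refine ⟨Or.inr ⟨i, hi1n, le_refl i, rfl⟩, ?_⟩
      have h : (2 : ℝ) • E n i - E n i = E n i := by module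
      rw [h]
      exact Or.inl (Or.inr ⟨i, hi1n, hinn, rfl⟩)

end
end

section
/- (case B_n(i) of Theorem 6.4) Let n ≥ 5 and 3 ≤ i ≤ n−2, and set δ = −λ_i + ρ. Then the sequence (e_{i−1} − e_i, e_i − e_{i+1}) links −(e_{i+1} − e_{i+2}) + δ to −2(e_i − e_{i+1}) − (e_{i−1} − e_i) − (e_{i+1} − e_{i+2}) + δ. Explicitly: ⟨−(e_{i+1} − e_{i+2}) + δ, (e_{i−1} − e_i)^∨⟩ = 1, then ⟨s_{e_{i−1}−e_i}(−(e_{i+1} − e_{i+2}) + δ), (e_i − e_{i+1})^∨⟩ = 2, and s_{e_i − e_{i+1}} s_{e_{i−1} − e_i}(−(e_{i+1} − e_{i+2}) + δ) = −2(e_i − e_{i+1}) − (e_{i−1} − e_i) − (e_{i+1} − e_{i+2}) + δ. (By Lepowsky's criterion this shows the standard map between the generalized Verma modules arising from the Ω_2 system for V(μ+ε_{nγ}) of type B_n(i) is zero, so φ_{Ω2} is non-standard.) -/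
open scoped RealInnerProductSpace

noncomputable section

lemma inner_EE {n a b : ℕ} (ha1 : 1 ≤ a) (ha2 : a ≤ n) (hb1 : 1 ≤ b) (hb2 : b ≤ n) :
    ⟪E n a, E n b⟫ = if a = b then (1:ℝ) else 0 := by
  rw [E, E, dif_pos ⟨ha1, ha2⟩, dif_pos ⟨hb1, hb2⟩]
  simp [EuclideanSpace.inner_single_left, EuclideanSpace.single_apply, Fin.mk.injEq]
  split_ifs with h1 h2 h2 <;> try rfl
  · omega
  · omega

lemma inner_lambdaF_E {n i a : ℕ} (hi : i ≤ n) (ha1 : 1 ≤ a) (ha2 : a ≤ n) :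
    ⟪lambdaF n i, E n a⟫ = if a ≤ i then (1:ℝ) else 0 := by
  rw [lambdaF, sum_inner]
  have h : ∀ j ∈ Finset.Icc 1 i, ⟪E n j, E n a⟫ = if j = a then (1:ℝ) else 0 := by
    intro j hj
    rw [Finset.mem_Icc] at hj
    exact inner_EE hj.1 (hj.2.trans hi) ha1 ha2
  rw [Finset.sum_congr rfl h, Finset.sum_ite_eq' (Finset.Icc 1 i) a (fun _ => (1:ℝ))]
  simp [Finset.mem_Icc, ha1]

lemma inner_rhoB_E {n a : ℕ} (ha1 : 1 ≤ a) (ha2 : a ≤ n) :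
    ⟪rhoB n, E n a⟫ = (n : ℝ) - (a : ℝ) + 1 / 2 := by
  rw [rhoB, sum_inner]
  have h : ∀ j ∈ Finset.Icc 1 n, ⟪((n : ℝ) - (j : ℝ) + 1 / 2) • E n j, E n a⟫ =
      if j = a then (n : ℝ) - (j : ℝ) + 1 / 2 else 0 := by
    intro j hj
    rw [Finset.mem_Icc] at hj
    rw [real_inner_smul_left, inner_EE hj.1 hj.2 ha1 ha2, mul_ite, mul_one, mul_zero]
  rw [Finset.sum_congr rfl h,
    Finset.sum_ite_eq' (Finset.Icc 1 n) a (fun j => (n : ℝ) - (j : ℝ) + 1 / 2)]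
  simp [Finset.mem_Icc, ha1, ha2]

lemma coroot_sub {n a b : ℕ} (ha1 : 1 ≤ a) (ha2 : a ≤ n) (hb1 : 1 ≤ b) (hb2 : b ≤ n)
    (hab : a ≠ b) : coroot (E n a - E n b) = E n a - E n b := by
  have h2 : ⟪E n a - E n b, E n a - E n b⟫ = (2:ℝ) := by
    rw [inner_sub_left, inner_sub_right, inner_sub_right, inner_EE ha1 ha2 ha1 ha2,
      inner_EE ha1 ha2 hb1 hb2, inner_EE hb1 hb2 ha1 ha2, inner_EE hb1 hb2 hb1 hb2]
    simp [hab, Ne.symm hab]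
    norm_num
  rw [coroot, h2]
  norm_num

/-- case `B_n(i)`, `3 ≤ i ≤ n−2`, of Theorem 6.4: with `δ = −λ_i + ρ`,
the sequence `(e_{i−1} − e_i, e_i − e_{i+1})` links `−(e_{i+1} − e_{i+2}) + δ` to
`−2(e_i − e_{i+1}) − (e_{i−1} − e_i) − (e_{i+1} − e_{i+2}) + δ`, with the explicit
pairings `1` and `2` along the way. -/
theorem link_for_Bni_ngamma (n i : ℕ) (hn : 5 ≤ n) (hi1 : 3 ≤ i) (hi2 : i ≤ n - 2) :
    Links [E n (i - 1) - E n i, E n i - E n (i + 1)]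
      (-(E n (i + 1) - E n (i + 2)) + (-lambdaF n i + rhoB n))
      (-((2 : ℝ) • (E n i - E n (i + 1))) - (E n (i - 1) - E n i) - (E n (i + 1) - E n (i + 2))
        + (-lambdaF n i + rhoB n)) ∧
    ⟪-(E n (i + 1) - E n (i + 2)) + (-lambdaF n i + rhoB n),
        coroot (E n (i - 1) - E n i)⟫ = 1 ∧
    ⟪sRefl (E n (i - 1) - E n i)
        (-(E n (i + 1) - E n (i + 2)) + (-lambdaF n i + rhoB n)),
        coroot (E n i - E n (i + 1))⟫ = 2 ∧
    sRefl (E n i - E n (i + 1))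
        (sRefl (E n (i - 1) - E n i)
          (-(E n (i + 1) - E n (i + 2)) + (-lambdaF n i + rhoB n))) =
      -((2 : ℝ) • (E n i - E n (i + 1))) - (E n (i - 1) - E n i) - (E n (i + 1) - E n (i + 2))
        + (-lambdaF n i + rhoB n) := by
  set δ' : EuclideanSpace ℝ (Fin n) :=
    -(E n (i + 1) - E n (i + 2)) + (-lambdaF n i + rhoB n) with hδ'
  set β1 : EuclideanSpace ℝ (Fin n) := E n (i - 1) - E n i with hβ1
  set β2 : EuclideanSpace ℝ (Fin n) := E n i - E n (i + 1) with hβ2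
  have h1m : 1 ≤ i - 1 := by omega
  have h1M : i - 1 ≤ n := by omega
  have him : 1 ≤ i := by omega
  have hiM : i ≤ n := by omega
  have h2m : 1 ≤ i + 1 := by omega
  have h2M : i + 1 ≤ n := by omega
  have h3M : i + 2 ≤ n := by omega
  have key : ∀ a : ℕ, 1 ≤ a → a ≤ n → ⟪δ', E n a⟫ =
      -(if i + 1 = a then (1:ℝ) else 0) + (if i + 2 = a then (1:ℝ) else 0)
        - (if a ≤ i then (1:ℝ) else 0) + ((n : ℝ) - (a : ℝ) + 1 / 2) := by
    intro a ha1 ha2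
    rw [hδ', inner_add_left, inner_add_left, inner_neg_left, inner_neg_left,
      inner_sub_left, inner_EE h2m h2M ha1 ha2, inner_EE (by omega) h3M ha1 ha2,
      inner_lambdaF_E hiM ha1 ha2, inner_rhoB_E ha1 ha2]
    ring
  have hcr1 : coroot β1 = β1 := coroot_sub h1m h1M him hiM (by omega)
  have hcr2 : coroot β2 = β2 := coroot_sub him hiM h2m h2M (by omega)
  have hc1 : ⟪δ', coroot β1⟫ = 1 := by
    rw [hcr1, hβ1, inner_sub_right, key (i - 1) h1m h1M, key i him hiM]
    rw [if_neg (by omega), if_neg (by omega), if_pos (by omega),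
      if_neg (by omega), if_neg (by omega), if_pos le_rfl, Nat.cast_sub him]
    push_cast
    ring
  have hs1 : sRefl β1 δ' = δ' - β1 := by
    rw [sRefl, hc1, one_smul]
  have hc2' : ⟪δ' - β1, coroot β2⟫ = 2 := by
    rw [hcr2, hβ2, inner_sub_left, inner_sub_right, inner_sub_right,
      key i him hiM, key (i + 1) h2m h2M, hβ1, inner_sub_left, inner_sub_left,
      inner_EE h1m h1M him hiM, inner_EE h1m h1M h2m h2M,
      inner_EE him hiM him hiM, inner_EE him hiM h2m h2M]
    norm_num [show i + 1 ≠ i by omega, show i + 2 ≠ i by omega,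
      show ¬(i + 1 ≤ i) by omega, show i + 2 ≠ i + 1 by omega,
      show i - 1 ≠ i by omega, show i - 1 ≠ i + 1 by omega, show i ≠ i + 1 by omega]
  have hc2 : ⟪sRefl β1 δ', coroot β2⟫ = 2 := by rw [hs1]; exact hc2'
  have h3 : sRefl β2 (sRefl β1 δ') =
      -((2 : ℝ) • β2) - β1 - (E n (i + 1) - E n (i + 2)) + (-lambdaF n i + rhoB n) := by
    rw [hs1, sRefl, hc2', hδ']
    module
  refine ⟨?_, hc1, hc2, h3⟩
  refine Links.cons 1 (by rw [hc1]; norm_num) (Links.cons 2 (by rw [hc2]; norm_num) ?_)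
  rw [h3]
  exact Links.nil _

end
end

section
/- (case D_n(i) of Theorem 6.4) Let n ≥ 6 and 3 ≤ i ≤ n−3, and set δ = −(n − i − 1)λ_i + ρ_D. Then the sequence (e_{n−1} − e_n, e_i − e_{n−1}) links −(e_{n−1} + e_n) + δ to −2e_i + δ. Explicitly: ⟨−(e_{n−1} + e_n) + δ, (e_{n−1} − e_n)^∨⟩ = 1, then ⟨s_{e_{n−1}−e_n}(−(e_{n−1} + e_n) + δ), (e_i − e_{n−1})^∨⟩ = 2, and s_{e_i − e_{n−1}} s_{e_{n−1} − e_n}(−(e_{n−1} + e_n) + δ) = −2e_i + δ. (By Lepowsky's criterion this shows the standard map between the generalized Verma modules arising from the Ω_2 system for V(μ+ε_γ) of type D_n(i) is zero, so φ_{Ω2} is non-standard.) -/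
open scoped RealInnerProductSpace

noncomputable section

/-- Half the sum of the positive roots of type `D_n`: `ρ_D = Σ_{j=1}^n (n − j) e_j`. -/
def rhoD (n : ℕ) : EuclideanSpace ℝ (Fin n) :=
  ∑ j ∈ Finset.Icc 1 n, ((n : ℝ) - (j : ℝ)) • E n j

/-- `δ = −(n − i − 1)λ_i + ρ_D`. -/
def deltaD (n i : ℕ) : EuclideanSpace ℝ (Fin n) :=
  (-((n : ℝ) - (i : ℝ) - 1)) • lambdaF n i + rhoD n

lemma inner_E_E (n j k : ℕ) (hj1 : 1 ≤ j) (hj2 : j ≤ n) (hk1 : 1 ≤ k) (hk2 : k ≤ n) :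
    ⟪E n j, E n k⟫ = if j = k then (1:ℝ) else 0 := by
  rw [E, E, dif_pos ⟨hj1, hj2⟩, dif_pos ⟨hk1, hk2⟩, EuclideanSpace.inner_single_left]
  simp only [EuclideanSpace.single_apply, map_one, one_mul, Fin.mk.injEq]
  by_cases h : j = k
  · simp [h]
  · rw [if_neg h, if_neg (by omega)]

lemma inner_deltaD (n i j : ℕ) (hi : i ≤ n) (hj1 : 1 ≤ j) (hj2 : j ≤ n) :
    ⟪deltaD n i, E n j⟫ =
      (if j ≤ i then -((n : ℝ) - (i : ℝ) - 1) else 0) + ((n : ℝ) - (j : ℝ)) := by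
  rw [deltaD, lambdaF, rhoD, inner_add_left, inner_smul_left, sum_inner, sum_inner]
  have h1 : ∀ k ∈ Finset.Icc 1 i, ⟪E n k, E n j⟫ = if k = j then (1:ℝ) else 0 := by
    intro k hk
    simp only [Finset.mem_Icc] at hk
    exact inner_E_E n k j hk.1 (le_trans hk.2 hi) hj1 hj2
  rw [Finset.sum_congr rfl h1, Finset.sum_ite_eq' (Finset.Icc 1 i) j (fun _ => (1:ℝ))]
  have h2 : ∀ k ∈ Finset.Icc 1 n, ⟪((n : ℝ) - (k : ℝ)) • E n k, E n j⟫
      = if k = j then ((n:ℝ) - k) else 0 := by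
    intro k hk
    simp only [Finset.mem_Icc] at hk
    rw [inner_smul_left, inner_E_E n k j hk.1 hk.2 hj1 hj2]
    by_cases h : k = j <;> simp [h]
  rw [Finset.sum_congr rfl h2, Finset.sum_ite_eq' (Finset.Icc 1 n) j (fun k => ((n:ℝ) - k))]
  simp only [Finset.mem_Icc, hj1, hj2, and_self, if_true]
  by_cases h : j ≤ i <;> simp [h]

/-- case `D_n(i)` of Theorem 6.4: with `δ = −(n − i − 1)λ_i + ρ_D`, the
sequence `(e_{n−1} − e_n, e_i − e_{n−1})` links `−(e_{n−1} + e_n) + δ` to `−2e_i + δ`,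
with the explicit pairings `1` and `2` along the way. -/
theorem link_for_Dni_gamma (n i : ℕ) (hn : 6 ≤ n) (hi1 : 3 ≤ i) (hi2 : i ≤ n - 3) :
    Links [E n (n - 1) - E n n, E n i - E n (n - 1)]
      (-(E n (n - 1) + E n n) + deltaD n i)
      (-((2 : ℝ) • E n i) + deltaD n i) ∧
    ⟪-(E n (n - 1) + E n n) + deltaD n i, coroot (E n (n - 1) - E n n)⟫ = 1 ∧
    ⟪sRefl (E n (n - 1) - E n n) (-(E n (n - 1) + E n n) + deltaD n i),
        coroot (E n i - E n (n - 1))⟫ = 2 ∧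
    sRefl (E n i - E n (n - 1))
        (sRefl (E n (n - 1) - E n n) (-(E n (n - 1) + E n n) + deltaD n i)) =
      -((2 : ℝ) • E n i) + deltaD n i := by
  have hi' : i ≤ n := by omega
  have h1i : 1 ≤ i := by omega
  have ha1 : 1 ≤ n - 1 := by omega
  have ha2 : n - 1 ≤ n := by omega
  have hn1 : 1 ≤ n := by omega
  have castA : ((n - 1 : ℕ) : ℝ) = (n : ℝ) - 1 := by
    push_cast [hn1]; ring
  -- inner products of basis vectors
  have eII : ⟪E n i, E n i⟫ = (1:ℝ) := by rw [inner_E_E n i i h1i hi' h1i hi', if_pos rfl]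
  have eAA : ⟪E n (n-1), E n (n-1)⟫ = (1:ℝ) := by
    rw [inner_E_E n (n-1) (n-1) ha1 ha2 ha1 ha2, if_pos rfl]
  have eNN : ⟪E n n, E n n⟫ = (1:ℝ) := by rw [inner_E_E n n n hn1 le_rfl hn1 le_rfl, if_pos rfl]
  have eAN : ⟪E n (n-1), E n n⟫ = (0:ℝ) := by
    rw [inner_E_E n (n-1) n ha1 ha2 hn1 le_rfl, if_neg (by omega)]
  have eNA : ⟪E n n, E n (n-1)⟫ = (0:ℝ) := by
    rw [inner_E_E n n (n-1) hn1 le_rfl ha1 ha2, if_neg (by omega)]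
  have eIA : ⟪E n i, E n (n-1)⟫ = (0:ℝ) := by
    rw [inner_E_E n i (n-1) h1i hi' ha1 ha2, if_neg (by omega)]
  have eAI : ⟪E n (n-1), E n i⟫ = (0:ℝ) := by
    rw [inner_E_E n (n-1) i ha1 ha2 h1i hi', if_neg (by omega)]
  have eIN : ⟪E n i, E n n⟫ = (0:ℝ) := by
    rw [inner_E_E n i n h1i hi' hn1 le_rfl, if_neg (by omega)]
  have eNI : ⟪E n n, E n i⟫ = (0:ℝ) := by
    rw [inner_E_E n n i hn1 le_rfl h1i hi', if_neg (by omega)]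
  -- inner products with delta
  have dI : ⟪deltaD n i, E n i⟫ = (1:ℝ) := by
    rw [inner_deltaD n i i hi' h1i hi', if_pos le_rfl]; ring
  have dA : ⟪deltaD n i, E n (n-1)⟫ = (1:ℝ) := by
    rw [inner_deltaD n i (n-1) hi' ha1 ha2, if_neg (by omega), castA]; ring
  have dN : ⟪deltaD n i, E n n⟫ = (0:ℝ) := by
    rw [inner_deltaD n i n hi' hn1 le_rfl, if_neg (by omega)]; ring
  -- coroots
  have c1 : coroot (E n (n-1) - E n n) = E n (n-1) - E n n := by
    rw [coroot]
    rw [inner_sub_left, inner_sub_right, inner_sub_right, eAA, eAN, eNA, eNN]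
    norm_num
  have c2 : coroot (E n i - E n (n-1)) = E n i - E n (n-1) := by
    rw [coroot]
    rw [inner_sub_left, inner_sub_right, inner_sub_right, eII, eIA, eAI, eAA]
    norm_num
  -- first pairing
  have I1 : ⟪-(E n (n-1) + E n n) + deltaD n i, E n (n-1) - E n n⟫ = (1:ℝ) := by
    simp only [inner_add_left, inner_neg_left, inner_sub_right, eAA, eAN, eNA, eNN, dA, dN]
    ring
  have hc1 : ⟪-(E n (n-1) + E n n) + deltaD n i, coroot (E n (n-1) - E n n)⟫ = (1:ℝ) := by
    rw [c1, I1]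
  have v1def : sRefl (E n (n-1) - E n n) (-(E n (n-1) + E n n) + deltaD n i)
      = (-(E n (n-1) + E n n) + deltaD n i) - (1:ℝ) • (E n (n-1) - E n n) := by
    rw [sRefl, hc1]
  -- second pairing
  have I2 : ⟪sRefl (E n (n-1) - E n n) (-(E n (n-1) + E n n) + deltaD n i),
      E n i - E n (n-1)⟫ = (2:ℝ) := by
    rw [v1def]
    simp only [inner_sub_left, inner_add_left, inner_neg_left, inner_sub_right,
      inner_smul_left, eII, eIA, eAI, eAA, eIN, eNI, eAN, eNA, dI, dA]
    norm_num
  have hc2 : ⟪sRefl (E n (n-1) - E n n) (-(E n (n-1) + E n n) + deltaD n i),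
      coroot (E n i - E n (n-1))⟫ = (2:ℝ) := by rw [c2, I2]
  -- final reflection
  have final : sRefl (E n i - E n (n-1))
      (sRefl (E n (n-1) - E n n) (-(E n (n-1) + E n n) + deltaD n i))
      = -((2 : ℝ) • E n i) + deltaD n i := by
    rw [sRefl, hc2, v1def]
    module
  refine ⟨?_, hc1, hc2, final⟩
  refine Links.cons 1 (by rw [hc1]; norm_num) (Links.cons 2 (by rw [hc2]; norm_num) ?_)
  rw [final]
  exact Links.nil _

end
end
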